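/- Let n = k+1 and let C_f be the n×n matrix with entries (C_f)_{i+1,j+1} = α_{i+j}·C(i+j, i) for 0 ≤ i, j ≤ n-1, where f(t) = Σ_{i=0}^k α_i t^i with α_k ≠ 0 (and α_m interpreted as 0 for m > k). Then det(C_f) = α_k^n · (-1)^{C(n,2)} · Π_{i=0}^k C(k,i). -/

import Mathlib

open Equiv Equiv.Perm

lemma finRotate_mul_revPerm (n : ℕ) :
    (finRotate (n + 1)) * (Fin.revPerm : Perm (Fin (n + 1))) =
      Equiv.Perm.decomposeFin.symm (0, (Fin.revPerm : Perm (Fin n))) := by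
  ext x
  refine Fin.cases ?_ (fun i => ?_) x
  · simp [Fin.rev_zero]
  · simp only [Perm.mul_apply, Fin.revPerm_apply,
      Equiv.Perm.decomposeFin_symm_apply_succ, Equiv.swap_self, Equiv.refl_apply]
    have h1 : (i.succ.rev : Fin (n + 1)) = (i.rev : Fin n).castSucc := by
      ext
      simp [Fin.val_rev, Nat.succ_sub_succ]
    rw [h1, finRotate_succ_apply, Fin.coeSucc_eq_succ]

lemma sign_revPerm (n : ℕ) :
    Perm.sign (Fin.revPerm : Perm (Fin n)) = (-1 : ℤˣ) ^ (n.choose 2) := by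
  induction n with
  | zero =>
    rw [show (Fin.revPerm : Perm (Fin 0)) = 1 from Subsingleton.elim _ _]
    simp
  | succ n ih =>
    have h := congrArg Perm.sign (finRotate_mul_revPerm n)
    rw [map_mul, sign_finRotate, Nat.add_sub_cancel, Equiv.Perm.decomposeFin.symm_sign, if_pos rfl, one_mul, ih] at h
    have h2 : Perm.sign (Fin.revPerm : Perm (Fin (n + 1))) =
        (-1 : ℤˣ) ^ n * ((-1 : ℤˣ) ^ n * Perm.sign (Fin.revPerm : Perm (Fin (n + 1)))) := by
      rw [← mul_assoc, ← pow_add, ← two_mul, pow_mul]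
      simp
    rw [h2, h]
    rw [← pow_add]
    congr 1
    rw [Nat.choose_succ_succ, Nat.choose_one_right]

theorem stmt_15 (k : ℕ) (α : ℕ → ℂ) (hαk : α k ≠ 0) (hα : ∀ m, k < m → α m = 0) :
    Matrix.det (Matrix.of fun i j : Fin (k + 1) =>
        α ((i : ℕ) + (j : ℕ)) * (((i : ℕ) + (j : ℕ)).choose (i : ℕ) : ℂ)) =
      α k ^ (k + 1) * (-1 : ℂ) ^ ((k + 1).choose 2) *
        ∏ i ∈ Finset.range (k + 1), (k.choose i : ℂ) := by
  set M : Matrix (Fin (k+1)) (Fin (k+1)) ℂ := Matrix.of fun i j : Fin (k + 1) =>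
        α ((i : ℕ) + (j : ℕ)) * (((i : ℕ) + (j : ℕ)).choose (i : ℕ) : ℂ) with hM
  have hperm := Matrix.det_permute' (Fin.revPerm) M
  have htri : (M.submatrix id Fin.revPerm).BlockTriangular id := by
    intro i j hij
    simp only [Matrix.submatrix_apply, id, hM, Matrix.of_apply, Fin.revPerm_apply]
    have : k < (i : ℕ) + (j.rev : ℕ) := by
      have := Fin.val_rev j
      have hj : (j : ℕ) < i := hij
      omega
    rw [hα _ this, zero_mul]
  have hdet := Matrix.det_of_upperTriangular htri
  have hdiag : ∀ i : Fin (k+1), (M.submatrix id Fin.revPerm) i i = α k * (k.choose i : ℂ) := by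
    intro i
    simp only [Matrix.submatrix_apply, id, hM, Matrix.of_apply, Fin.revPerm_apply]
    have h1 : (i : ℕ) + (i.rev : ℕ) = k := by
      have := Fin.val_rev i
      omega
    rw [h1]
  have hprod : ∏ i : Fin (k+1), (M.submatrix id Fin.revPerm) i i =
      α k ^ (k+1) * ∏ i ∈ Finset.range (k + 1), (k.choose i : ℂ) := by
    rw [Finset.prod_congr rfl (fun i _ => hdiag i), Finset.prod_mul_distrib,
      Finset.prod_const, Finset.card_univ, Fintype.card_fin]
    congr 1
    exact (Finset.prod_range fun i => (k.choose i : ℂ)).symm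
  rw [hdet, hprod, sign_revPerm] at hperm
  have hsign : ((((-1 : ℤˣ) ^ ((k+1).choose 2) : ℤˣ) : ℤ) : ℂ) = (-1 : ℂ) ^ ((k+1).choose 2) := by
    rw [Units.val_pow_eq_pow_val]
    push_cast
    norm_num
  rw [hsign] at hperm
  have hsq : (-1 : ℂ) ^ ((k+1).choose 2) * (-1 : ℂ) ^ ((k+1).choose 2) = 1 := by
    rw [← mul_pow]; norm_num
  linear_combination (-(-1 : ℂ) ^ ((k+1).choose 2)) * hperm - M.det * hsq
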